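/- (First-order rigid frameworks, Corollary.) Suppose the framework (p,E) is first-order rigid relative to 𝒞, quantitatively: there is σ₀ > 0 with |R(p)v| ≥ σ₀|v| for all v ∈ 𝒞. Then: (i) every q ∈ 𝒞^p with q ≠ p and the same edge lengths as p (|q_i − q_j| = |p_i − p_j| for every edge (i,j) ∈ E) satisfies |q − p| ≥ (σ₀/(2√z))·(√5 − 1)/2; (ii) for every continuous path q : [0,1] → 𝒞^p with q(0) = p and with q(1) ≠ p having the same edge lengths as p, there exists t ∈ [0,1] with |e(q(t)) − e(p)| ≥ σ₀²(√(11/3) − 1)/(2√3·√z). -/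

import Mathlib

noncomputable section
open scoped BigOperators InnerProductSpace Classical

/-- Configuration space of `n` points in `ℝ^d`, with the Euclidean norm on `ℝ^{dn}`. -/
abbrev Config (n d : ℕ) := PiLp 2 (fun _ : Fin n => EuclideanSpace ℝ (Fin d))

/-- The rigidity operator `R(q)` applied to `u`: the `k`-th entry, for edge `k = (i,j)`,
is `⟨q_i - q_j, u_i - u_j⟩`. -/
def rig {n d m : ℕ} (E : Fin m → Fin n × Fin n) (q u : Config n d) :
    EuclideanSpace ℝ (Fin m) :=
  WithLp.toLp 2 fun k => ⟪q (E k).1 - q (E k).2, u (E k).1 - u (E k).2⟫_ℝ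

/-- The stress form `Ω_ω(v) = Σ_{(i,j)∈E} ω_{ij} |v_i - v_j|²`. -/
def stressForm {n d m : ℕ} (E : Fin m → Fin n × Fin n)
    (ω : EuclideanSpace ℝ (Fin m)) (v : Config n d) : ℝ :=
  ∑ k, ω k * ‖v (E k).1 - v (E k).2‖ ^ 2

/-- The vector `ωᵀ R(p) ∈ ℝ^{dn}` whose `l`-th block is `Σ_{j : (l,j)∈E} ω_{lj} (p_l - p_j)`. -/
def stressGrad {n d m : ℕ} (E : Fin m → Fin n × Fin n)
    (ω : EuclideanSpace ℝ (Fin m)) (p : Config n d) : Config n d :=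
  WithLp.toLp 2 fun l => ∑ k, (((if (E k).1 = l then (1:ℝ) else 0) - (if (E k).2 = l then (1:ℝ) else 0)) * ω k) •
    (p (E k).1 - p (E k).2)

/-- The vector `e(q) ∈ ℝ^m` of squared edge lengths. -/
def esq {n d m : ℕ} (E : Fin m → Fin n × Fin n) (q : Config n d) :
    EuclideanSpace ℝ (Fin m) :=
  WithLp.toLp 2 fun k => ‖q (E k).1 - q (E k).2‖ ^ 2

/-- `z` bounds the number of edges incident to each vertex (`z ≥` the maximum adjacency). -/
def degBound {n m : ℕ} (E : Fin m → Fin n × Fin n) (z : ℝ) : Prop :=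
  ∀ l : Fin n, ((Finset.univ.filter (fun k => (E k).1 = l ∨ (E k).2 = l)).card : ℝ) ≤ z

/-- degree-counting sum bound -/
lemma rigid_deg_sum {n m : ℕ} (E : Fin m → Fin n × Fin n) (hE : ∀ k, (E k).1 ≠ (E k).2)
    {z : ℝ} (hdeg : degBound E z) (f : Fin n → ℝ) (hf : ∀ l, 0 ≤ f l) :
    ∑ k, (f (E k).1 + f (E k).2) ≤ z * ∑ l, f l := by
  have h1 : ∀ k, f (E k).1 + f (E k).2
      = ∑ l, (if (E k).1 = l ∨ (E k).2 = l then f l else 0) := by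
    intro k
    have : ∀ l, (if (E k).1 = l ∨ (E k).2 = l then f l else 0)
        = (if (E k).1 = l then f l else 0) + (if (E k).2 = l then f l else 0) := by
      intro l
      by_cases h1 : (E k).1 = l <;> by_cases h2 : (E k).2 = l <;>
        simp [h1, h2]
      exact absurd (h1.trans h2.symm) (hE k)
    simp_rw [this, Finset.sum_add_distrib, Finset.sum_ite_eq, Finset.mem_univ, if_true]
  calc ∑ k, (f (E k).1 + f (E k).2)
      = ∑ l, ∑ k, (if (E k).1 = l ∨ (E k).2 = l then f l else 0) := by
        simp_rw [h1]; exact Finset.sum_comm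
    _ = ∑ l, ((Finset.univ.filter (fun k => (E k).1 = l ∨ (E k).2 = l)).card : ℝ) * f l := by
        refine Finset.sum_congr rfl fun l _ => ?_
        rw [← Finset.sum_filter, Finset.sum_const, nsmul_eq_mul]
    _ ≤ ∑ l, z * f l := by
        refine Finset.sum_le_sum fun l _ => mul_le_mul_of_nonneg_right (hdeg l) (hf l)
    _ = z * ∑ l, f l := by rw [Finset.mul_sum]

/-- key decomposition pointwise -/
lemma rigid_decomp {n d m : ℕ} (E : Fin m → Fin n × Fin n) (p q : Config n d) (k : Fin m) :
    esq E q k - esq E p k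
      = 2 * rig E p (q - p) k + ‖(q - p) (E k).1 - (q - p) (E k).2‖ ^ 2 := by
  simp only [esq, rig, PiLp.toLp_apply]
  have h1 : (q - p) (E k).1 - (q - p) (E k).2
      = (q (E k).1 - q (E k).2) - (p (E k).1 - p (E k).2) := by
    simp; abel
  have h2 : q (E k).1 - q (E k).2
      = (p (E k).1 - p (E k).2) + ((q - p) (E k).1 - (q - p) (E k).2) := by
    rw [h1]; abel
  rw [h2, @norm_add_sq_real]
  ring

/-- norm bound on the quadratic remainder -/
lemma rigid_w_bound {n d m : ℕ} (E : Fin m → Fin n × Fin n) (hE : ∀ k, (E k).1 ≠ (E k).2)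
    {z : ℝ} (hz : 1 ≤ z) (hdeg : degBound E z) (v : Config n d) :
    ∑ k, (‖v (E k).1 - v (E k).2‖ ^ 2) ^ 2 ≤ 8 * z * (‖v‖ ^ 2) ^ 2 := by
  have step1 : ∀ k : Fin m, (‖v (E k).1 - v (E k).2‖ ^ 2) ^ 2
      ≤ 8 * ((‖v (E k).1‖ ^ 2) ^ 2 + (‖v (E k).2‖ ^ 2) ^ 2) := by
    intro k
    set x := ‖v (E k).1‖ with hx
    set y := ‖v (E k).2‖ with hy
    set s := ‖v (E k).1 - v (E k).2‖ with hs
    have h : s ≤ x + y := norm_sub_le _ _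
    have h1 : (0:ℝ) ≤ x := norm_nonneg _
    have h2 : (0:ℝ) ≤ y := norm_nonneg _
    have h3 : (0:ℝ) ≤ s := norm_nonneg _
    have e1 : s ^ 2 ≤ 2 * (x ^ 2 + y ^ 2) := by nlinarith [sq_nonneg (x - y)]
    have e2 : (s ^ 2) ^ 2 ≤ (2 * (x ^ 2 + y ^ 2)) ^ 2 :=
      pow_le_pow_left₀ (sq_nonneg s) e1 2
    nlinarith [sq_nonneg (x ^ 2 - y ^ 2)]
  calc ∑ k, (‖v (E k).1 - v (E k).2‖ ^ 2) ^ 2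
      ≤ ∑ k, 8 * ((‖v (E k).1‖ ^ 2) ^ 2 + (‖v (E k).2‖ ^ 2) ^ 2) :=
        Finset.sum_le_sum fun k _ => step1 k
    _ = 8 * ∑ k, ((‖v (E k).1‖ ^ 2) ^ 2 + (‖v (E k).2‖ ^ 2) ^ 2) := by rw [Finset.mul_sum]
    _ ≤ 8 * (z * ∑ l, (‖v l‖ ^ 2) ^ 2) := by
        have := rigid_deg_sum E hE hdeg (fun l => (‖v l‖ ^ 2) ^ 2)
          (fun l => by positivity)
        linarith
    _ ≤ 8 * (z * (∑ l, ‖v l‖ ^ 2) ^ 2) := by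
        have hzz : (0:ℝ) ≤ z := le_trans zero_le_one hz
        have h := Finset.sum_sq_le_sq_sum_of_nonneg (s := Finset.univ)
          (f := fun l : Fin n => ‖v l‖ ^ 2) (fun l _ => by positivity)
        simp only [] at h
        exact mul_le_mul_of_nonneg_left (mul_le_mul_of_nonneg_left h hzz) (by norm_num)
    _ = 8 * z * (‖v‖ ^ 2) ^ 2 := by
        rw [PiLp.norm_sq_eq_of_L2]; ring

/-- main lower bound on change in squared edge lengths -/
lemma rigid_main {n d m : ℕ} (E : Fin m → Fin n × Fin n) (hE : ∀ k, (E k).1 ≠ (E k).2)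
    (p : Config n d) (C : Submodule ℝ (Config n d))
    {z : ℝ} (hz : 1 ≤ z) (hdeg : degBound E z)
    {σ₀ : ℝ} (hrig : ∀ v ∈ C, σ₀ * ‖v‖ ≤ ‖rig E p v‖)
    (q : Config n d) (hq : q - p ∈ C) :
    2 * σ₀ * ‖q - p‖ - Real.sqrt (8 * z) * ‖q - p‖ ^ 2 ≤ ‖esq E q - esq E p‖ := by
  set v := q - p with hv
  set W : EuclideanSpace ℝ (Fin m) := WithLp.toLp 2 fun k => ‖v (E k).1 - v (E k).2‖ ^ 2 with hW
  have hsum : esq E q - esq E p = (2:ℝ) • rig E p v + W := by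
    ext k
    have := rigid_decomp E p q k
    simp only [PiLp.add_apply, PiLp.sub_apply, PiLp.smul_apply, smul_eq_mul, hW]
    exact this
  have hWn : ‖W‖ ≤ Real.sqrt (8 * z) * ‖v‖ ^ 2 := by
    have hb : ‖W‖ ^ 2 ≤ 8 * z * (‖v‖ ^ 2) ^ 2 := by
      rw [PiLp.norm_sq_eq_of_L2]
      refine le_trans (le_of_eq ?_) (rigid_w_bound E hE hz hdeg v)
      refine Finset.sum_congr rfl fun k _ => ?_
      simp [hW, sq_abs]
    have h1 : ‖W‖ = Real.sqrt (‖W‖ ^ 2) := (Real.sqrt_sq (norm_nonneg _)).symm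
    rw [h1]
    calc Real.sqrt (‖W‖ ^ 2) ≤ Real.sqrt (8 * z * (‖v‖ ^ 2) ^ 2) := Real.sqrt_le_sqrt hb
      _ = Real.sqrt (8 * z) * ‖v‖ ^ 2 := by
          rw [Real.sqrt_mul (by positivity), Real.sqrt_sq (by positivity)]
  have hB : 2 * σ₀ * ‖v‖ ≤ ‖(2:ℝ) • rig E p v‖ := by
    rw [norm_smul]
    simp only [Real.norm_ofNat]
    have := hrig v hq
    linarith
  have htri : ‖(2:ℝ) • rig E p v‖ - ‖W‖ ≤ ‖(2:ℝ) • rig E p v + W‖ := by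
    have h : ‖(2:ℝ) • rig E p v‖ ≤ ‖(2:ℝ) • rig E p v + W‖ + ‖W‖ := by
      calc ‖(2:ℝ) • rig E p v‖ = ‖((2:ℝ) • rig E p v + W) - W‖ := by
            rw [add_sub_cancel_right]
        _ ≤ ‖(2:ℝ) • rig E p v + W‖ + ‖W‖ := norm_sub_le _ _
    linarith
  rw [hsum]
  linarith

lemma sqrt5_fact : Real.sqrt 5 ≤ 2.3 := by
  nlinarith [Real.sq_sqrt (show (0:ℝ) ≤ 5 by norm_num), Real.sqrt_nonneg 5]

lemma sqrt113_fact : Real.sqrt (11/3) ≤ 2 := by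
  nlinarith [Real.sq_sqrt (show (0:ℝ) ≤ 11/3 by norm_num), Real.sqrt_nonneg (11/3)]

lemma sqrt3_fact : 1.7 ≤ Real.sqrt 3 := by
  nlinarith [Real.sq_sqrt (show (0:ℝ) ≤ 3 by norm_num), Real.sqrt_nonneg 3]


/-- **Corollary (First-order rigid frameworks).** If `|R(p)v| ≥ σ₀|v|` on `𝒞` with `σ₀ > 0`,
then (i) any other configuration in `𝒞^p` with the same edge lengths as `p` lies at distance
at least `(σ₀/(2√z))·(√5−1)/2` from `p`, and (ii) any continuous path in `𝒞^p` from `p` to a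
different configuration with the same edge lengths passes through a point where the squared
edge lengths have changed by at least `σ₀²(√(11/3)−1)/(2√3·√z)`. -/
theorem first_order_rigid_corollary {n d m : ℕ} (E : Fin m → Fin n × Fin n) (hm : 0 < m)
    (hE : ∀ k, (E k).1 ≠ (E k).2)
    (p : Config n d) (C : Submodule ℝ (Config n d))
    (z : ℝ) (hz : 1 ≤ z) (hdeg : degBound E z)
    (σ₀ : ℝ) (hσ₀ : 0 < σ₀)
    (hrig : ∀ v ∈ C, σ₀ * ‖v‖ ≤ ‖rig E p v‖) :
    (∀ q : Config n d, q - p ∈ C → q ≠ p →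
      (∀ k, ‖q (E k).1 - q (E k).2‖ = ‖p (E k).1 - p (E k).2‖) →
      (σ₀ / (2 * Real.sqrt z)) * ((Real.sqrt 5 - 1) / 2) ≤ ‖q - p‖) ∧
    (∀ q : ℝ → Config n d, ContinuousOn q (Set.Icc 0 1) → q 0 = p →
      (∀ t ∈ Set.Icc (0:ℝ) 1, q t - p ∈ C) →
      q 1 ≠ p →
      (∀ k, ‖q 1 (E k).1 - q 1 (E k).2‖ = ‖p (E k).1 - p (E k).2‖) →
      ∃ t ∈ Set.Icc (0:ℝ) 1,
        σ₀ ^ 2 * (Real.sqrt (11 / 3) - 1) / (2 * Real.sqrt 3 * Real.sqrt z) ≤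
          ‖esq E (q t) - esq E p‖) := by
  have hz0 : (0:ℝ) < z := lt_of_lt_of_le zero_lt_one hz
  set r := Real.sqrt (8 * z) with hr
  have hr0 : 0 < r := Real.sqrt_pos.mpr (by linarith)
  have hrsq : r ^ 2 = 8 * z := Real.sq_sqrt (by linarith)
  set s := Real.sqrt z with hs
  have hs0 : 0 < s := Real.sqrt_pos.mpr hz0
  have hssq : s ^ 2 = z := Real.sq_sqrt (le_of_lt hz0)
  have hrs : r = 2 * Real.sqrt 2 * s := by
    rw [hr, hs, show (8:ℝ) * z = (2 * Real.sqrt 2)^2 * z by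
      rw [mul_pow, Real.sq_sqrt (by norm_num : (0:ℝ) ≤ 2)]; ring,
      Real.sqrt_mul (by positivity), Real.sqrt_sq (by positivity)]
  have hsqrt2 : (1.4:ℝ) ≤ Real.sqrt 2 ∧ Real.sqrt 2 ≤ 1.5 := by
    constructor <;>
      nlinarith [Real.sq_sqrt (show (0:ℝ) ≤ 2 by norm_num), Real.sqrt_nonneg 2]
  -- lower bound at configurations with equal edge lengths
  have key : ∀ q : Config n d, q - p ∈ C → q ≠ p →
      (∀ k, ‖q (E k).1 - q (E k).2‖ = ‖p (E k).1 - p (E k).2‖) →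
      2 * σ₀ / r ≤ ‖q - p‖ := by
    intro q hqC hqp heq
    have hesq : esq E q - esq E p = 0 := by
      ext k
      simp only [PiLp.sub_apply, esq, PiLp.toLp_apply, heq k, PiLp.zero_apply, sub_self]
    have hmain := rigid_main E hE p C hz hdeg hrig q hqC
    rw [hesq, norm_zero] at hmain
    have hv0 : 0 < ‖q - p‖ := by
      rw [norm_pos_iff]
      intro h
      exact hqp (by rwa [sub_eq_zero] at h)
    rw [div_le_iff₀ hr0]
    nlinarith
  constructor
  · intro q hqC hqp heq
    have h := key q hqC hqp heq
    have h5 := sqrt5_fact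
    have h5' := Real.sqrt_nonneg 5
    -- (σ₀/(2s))·((√5−1)/2) ≤ 2σ₀/r  since r = 2√2 s
    have hgoal : (σ₀ / (2 * s)) * ((Real.sqrt 5 - 1) / 2) ≤ 2 * σ₀ / r := by
      rw [div_mul_div_comm, div_le_div_iff₀ (by positivity) hr0, hrs]
      have hc : (Real.sqrt 5 - 1) * (2 * Real.sqrt 2) ≤ 8 := by
        nlinarith [hsqrt2.1, hsqrt2.2]
      have hk : (0:ℝ) ≤ σ₀ * s := by positivity
      nlinarith [mul_le_mul_of_nonneg_left hc hk]
    exact le_trans hgoal h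
  · intro q hqcont hq0 hqC hq1 heq
    -- at t = 1 the displacement is at least 2σ₀/r
    have h1 : 2 * σ₀ / r ≤ ‖q 1 - p‖ := key (q 1) (hqC 1 (by norm_num)) hq1 heq
    -- continuity of t ↦ ‖q t − p‖
    have hcont : ContinuousOn (fun t => ‖q t - p‖) (Set.Icc (0:ℝ) 1) :=
      (hqcont.sub continuousOn_const).norm
    have hmem : σ₀ / r ∈ Set.Icc ‖q 0 - p‖ ‖q 1 - p‖ := by
      constructor
      · rw [hq0, sub_self, norm_zero]; positivity
      · have : σ₀ / r ≤ 2 * σ₀ / r := by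
          rw [div_le_div_iff₀ hr0 hr0]; nlinarith
        linarith
    obtain ⟨t, ht, hteq⟩ := intermediate_value_Icc (by norm_num : (0:ℝ) ≤ 1) hcont hmem
    refine ⟨t, ht, ?_⟩
    have hmain := rigid_main E hE p C hz hdeg hrig (q t) (hqC t ht)
    have hteq' : ‖q t - p‖ = σ₀ / r := hteq
    rw [hteq', ← hr] at hmain
    -- 2σ₀·(σ₀/r) − r·(σ₀/r)² = σ₀²/r
    have hval : σ₀ ^ 2 / r = 2 * σ₀ * (σ₀ / r) - r * (σ₀ / r) ^ 2 := by
      field_simp; ring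
    have hlow : σ₀ ^ 2 / r ≤ ‖esq E (q t) - esq E p‖ := by rw [hval]; linarith
    refine le_trans ?_ hlow
    -- σ₀²(√(11/3)−1)/(2√3 s) ≤ σ₀²/r,  r = 2√2 s
    have h3 := sqrt3_fact
    have h3' := Real.sqrt_nonneg 3
    have h11 := sqrt113_fact
    have h11' := Real.sqrt_nonneg (11/3)
    rw [div_le_div_iff₀ (by positivity) hr0, hrs]
    have hc2 : (Real.sqrt (11/3) - 1) * (2 * Real.sqrt 2) ≤ 2 * Real.sqrt 3 := by
      nlinarith [hsqrt2.1, hsqrt2.2, h3, h11, h11']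
    have hk2 : (0:ℝ) ≤ σ₀ ^ 2 * s := by positivity
    calc σ₀ ^ 2 * (Real.sqrt (11/3) - 1) * (2 * Real.sqrt 2 * s)
        = (σ₀ ^ 2 * s) * ((Real.sqrt (11/3) - 1) * (2 * Real.sqrt 2)) := by ring
      _ ≤ (σ₀ ^ 2 * s) * (2 * Real.sqrt 3) := mul_le_mul_of_nonneg_left hc2 hk2
      _ = σ₀ ^ 2 * (2 * Real.sqrt 3 * s) := by ring
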